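/- For the qubit spin operators S_x = σ_x/2, S_y = σ_y/2, S_z = σ_z/2 and any 2×2 density matrix ρ, the sum of the Wigner-Yanase skew informations satisfies I_ρ(S_x) + I_ρ(S_y) + I_ρ(S_z) ≥ 1 − (1/2)(Tr√ρ)². -/

import Mathlib

open Matrix
open scoped ComplexOrder

/-- The positive semidefinite square root of a positive semidefinite matrix, as defined in the
older Mathlib (`Matrix.PosSemidef.sqrt`, since removed). -/
noncomputable def Matrix.PosSemidef.sqrt {n 𝕜 : Type*} [Fintype n] [RCLike 𝕜] [DecidableEq n]
    {A : Matrix n n 𝕜} (hA : A.PosSemidef) : Matrix n n 𝕜 :=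
  (hA.1.eigenvectorUnitary : Matrix n n 𝕜) *
    diagonal (fun i => ((Real.sqrt (hA.1.eigenvalues i) : ℝ) : 𝕜)) *
    (star hA.1.eigenvectorUnitary : Matrix n n 𝕜)

noncomputable def pauliX : Matrix (Fin 2) (Fin 2) ℂ := !![0, 1; 1, 0]
noncomputable def pauliY : Matrix (Fin 2) (Fin 2) ℂ := !![0, -Complex.I; Complex.I, 0]
noncomputable def pauliZ : Matrix (Fin 2) (Fin 2) ℂ := !![1, 0; 0, -1]

/-- Wigner-Yanase skew information `I_ρ(X) = Tr(X²ρ) − Tr(√ρ X √ρ X)`. -/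
noncomputable def wySkew {ρ : Matrix (Fin 2) (Fin 2) ℂ} (hρ : ρ.PosSemidef)
    (X : Matrix (Fin 2) (Fin 2) ℂ) : ℂ :=
  (X ^ 2 * ρ).trace - (hρ.sqrt * X * hρ.sqrt * X).trace

theorem psd_sqrt_mul_self_aux {ρ : Matrix (Fin 2) (Fin 2) ℂ} (hA : ρ.PosSemidef) :
    hA.sqrt * hA.sqrt = ρ := by
  unfold Matrix.PosSemidef.sqrt
  have hU := Unitary.coe_star_mul_self hA.1.eigenvectorUnitary
  conv_rhs => rw [hA.1.spectral_theorem, Unitary.conjStarAlgAut_apply]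
  rw [show ∀ U D V : Matrix (Fin 2) (Fin 2) ℂ, U * D * V * (U * D * V) = U * (D * (V * U) * D) * V
    by intro U D V; simp only [Matrix.mul_assoc], hU, Matrix.mul_one, diagonal_mul_diagonal]
  congr 3
  funext i
  simp only [Function.comp_apply]
  rw [← RCLike.ofReal_mul, Real.mul_self_sqrt (hA.eigenvalues_nonneg i)]

theorem stmt9 (ρ : Matrix (Fin 2) (Fin 2) ℂ)
    (hρ : ρ.PosSemidef) (htr : ρ.trace = 1) :
    (1 : ℂ) - (1 / 2 : ℂ) * (hρ.sqrt.trace) ^ 2 ≤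
      wySkew hρ ((1 / 2 : ℂ) • pauliX) + wySkew hρ ((1 / 2 : ℂ) • pauliY) +
        wySkew hρ ((1 / 2 : ℂ) • pauliZ) := by
  apply le_of_eq
  have hss : hρ.sqrt * hρ.sqrt = ρ := psd_sqrt_mul_self_aux hρ
  have htr' : (hρ.sqrt * hρ.sqrt).trace = 1 := by rw [hss, htr]
  have sq14 : ∀ P : Matrix (Fin 2) (Fin 2) ℂ, P ^ 2 = 1 →
      ((1 / 2 : ℂ) • P) ^ 2 * ρ = (1 / 4 : ℂ) • ρ := by
    intro P hP
    rw [smul_pow, hP, smul_mul_assoc, one_mul]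
    norm_num
  have hx := sq14 pauliX (by ext i j; fin_cases i <;> fin_cases j <;>
    simp [pauliX, pow_two, Matrix.mul_apply, Fin.sum_univ_two, Matrix.one_apply])
  have hy := sq14 pauliY (by ext i j; fin_cases i <;> fin_cases j <;>
    simp [pauliY, pow_two, Matrix.mul_apply, Fin.sum_univ_two, Matrix.one_apply])
  have hz := sq14 pauliZ (by ext i j; fin_cases i <;> fin_cases j <;>
    simp [pauliZ, pow_two, Matrix.mul_apply, Fin.sum_univ_two, Matrix.one_apply])
  simp only [wySkew, hx, hy, hz, Matrix.trace_smul, htr, smul_eq_mul, mul_one]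
  set s := hρ.sqrt
  simp only [pauliX, pauliY, pauliZ, Matrix.trace, Matrix.mul_apply, Fin.sum_univ_two,
    Matrix.smul_apply, Matrix.diag_apply, Matrix.cons_val_zero, Matrix.cons_val_one,
    Matrix.head_cons, Matrix.head_fin_const, smul_eq_mul, Matrix.of_apply,
    Matrix.cons_val', Matrix.empty_val', Matrix.cons_val_fin_one] at htr' ⊢
  ring_nf
  
  ring_nf
  ring_nf at htr'
  linear_combination (-1/4 : ℂ) * htr' +
    (s 0 0 * s 1 1 * (-1/2) + s 0 1 ^ 2 * (1/4) + s 1 0 ^ 2 * (1/4)) * Complex.I_sq
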